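/- arXiv:2506.04451 — 7 statements merged into one kernel-verified Lean document; each statement's English description precedes it below -/
import Mathlib

section
/- Let 𝒜 = [[Φ, Ψ₁],[Ψ₂, -Θ]] be a generalized saddle-point matrix with Φ invertible and Schur complement S := Θ + Ψ₂ Φ⁻¹ Ψ₁ invertible, and let P = [[Φ, Ψ₁],[0, -S]]. Then (𝒜 P⁻¹ - I)² = 0, i.e., 𝒜 P⁻¹ - I is nilpotent of index at most two. -/
open Matrix

/-- For the generalized saddle-point matrix
`𝒜 = [[Φ, Ψ₁],[Ψ₂, -Θ]]` with `Φ` invertible and invertible Schur complement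
`S = Θ + Ψ₂ Φ⁻¹ Ψ₁`, and the block upper-triangular preconditioner
`P = [[Φ, Ψ₁],[0, -S]]`, one has `(𝒜 P⁻¹ - I)² = 0`. -/
theorem saddle_point_preconditioned_nilpotent
    (n m : ℕ) (hn : 0 < n) (hm : 0 < m)
    (Φ : Matrix (Fin n) (Fin n) ℝ) (Ψ₁ : Matrix (Fin n) (Fin m) ℝ)
    (Ψ₂ : Matrix (Fin m) (Fin n) ℝ) (Θ : Matrix (Fin m) (Fin m) ℝ)
    (hΦ : IsUnit Φ.det)
    (S : Matrix (Fin m) (Fin m) ℝ) (hS : S = Θ + Ψ₂ * Φ⁻¹ * Ψ₁)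
    (hSinv : IsUnit S.det)
    (𝒜 : Matrix (Fin n ⊕ Fin m) (Fin n ⊕ Fin m) ℝ)
    (h𝒜 : 𝒜 = Matrix.fromBlocks Φ Ψ₁ Ψ₂ (-Θ))
    (P : Matrix (Fin n ⊕ Fin m) (Fin n ⊕ Fin m) ℝ)
    (hP : P = Matrix.fromBlocks Φ Ψ₁ 0 (-S)) :
    (𝒜 * P⁻¹ - 1) ^ 2 = 0 := by
  have hΦu : IsUnit Φ := (isUnit_iff_isUnit_det Φ).mpr hΦ
  have hSu : IsUnit S := (isUnit_iff_isUnit_det S).mpr hSinv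
  have hnSu : IsUnit (-S) := by
    rcases hSu with ⟨u, hu⟩
    exact ⟨-u, by simp [← hu]⟩
  have hPu : IsUnit P := by
    rw [hP]
    exact isUnit_fromBlocks_zero₂₁.mpr ⟨hΦu, hnSu⟩
  have hPinv : P⁻¹ = fromBlocks Φ⁻¹ (-(Φ⁻¹ * Ψ₁ * (-S)⁻¹)) 0 (-S)⁻¹ := by
    rw [hP]
    exact inv_fromBlocks_zero₂₁_of_isUnit_iff _ _ _ (iff_of_true hΦu hnSu)
  have hΦΦ : Φ * Φ⁻¹ = 1 := mul_nonsing_inv Φ hΦ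
  have hnSinv : (-S)⁻¹ = -(S⁻¹) := by
    apply Matrix.inv_eq_right_inv
    simp [Matrix.mul_nonsing_inv S hSinv]
  have hSS : S * S⁻¹ = 1 := mul_nonsing_inv S hSinv
  have key : 𝒜 * P⁻¹ - 1 = fromBlocks 0 0 (Ψ₂ * Φ⁻¹) 0 := by
    rw [h𝒜, hPinv, fromBlocks_multiply, hnSinv]
    have h22 : Ψ₂ * -(Φ⁻¹ * Ψ₁ * -S⁻¹) + -Θ * -S⁻¹ = 1 := by
      have : Ψ₂ * (Φ⁻¹ * Ψ₁ * S⁻¹) + Θ * S⁻¹ = (Θ + Ψ₂ * Φ⁻¹ * Ψ₁) * S⁻¹ := by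
        rw [Matrix.add_mul]
        rw [add_comm]; simp [Matrix.mul_assoc]
      simp only [Matrix.mul_neg, Matrix.neg_mul, neg_neg]
      rw [this, ← hS, hSS]
    rw [h22]
    have h12 : Φ * -(Φ⁻¹ * Ψ₁ * -S⁻¹) + Ψ₁ * -S⁻¹ = 0 := by
      simp only [Matrix.mul_neg, Matrix.neg_mul, neg_neg]
      rw [← Matrix.mul_assoc, ← Matrix.mul_assoc, hΦΦ, Matrix.one_mul]
      abel
    rw [h12, hΦΦ]
    ext (i|i) (j|j) <;>
      simp [Matrix.fromBlocks, Matrix.one_apply, Sum.elim_inl, Sum.elim_inr]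
  rw [key, sq, fromBlocks_multiply]
  simp [fromBlocks_zero]
end

section
/- Let 𝒜 = [[Φ, Ψ₁],[Ψ₂, -Θ]] be a generalized saddle-point matrix with Φ invertible and Schur complement S := Θ + Ψ₂ Φ⁻¹ Ψ₁ invertible, and let P = [[Φ, Ψ₁],[0, -S]]. Then the spectrum of the preconditioned matrix 𝒜 P⁻¹ (regarded as a complex matrix) equals {1}; that is, all eigenvalues of the preconditioned matrix are equal to 1. -/
open Matrix

lemma spec_one_add_sq_zero {A : Type*} [Ring A] [Algebra ℂ A] [Nontrivial A]
    (N : A) (hN : N * N = 0) : spectrum ℂ (1 + N) = {1} := by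
  ext μ
  simp only [spectrum.mem_iff, Set.mem_singleton_iff]
  have key : algebraMap ℂ A μ - (1 + N) = algebraMap ℂ A (μ - 1) - N := by
    rw [map_sub, _root_.map_one, sub_add_eq_sub_sub]
  rw [key]
  constructor
  · intro h
    by_contra hμ
    apply h
    have hc : μ - 1 ≠ 0 := sub_ne_zero.mpr hμ
    set c := μ - 1 with hcdef
    set a := algebraMap ℂ A with ha
    have hfac : a c - N = a c * (1 - a c⁻¹ * N) := by
      rw [mul_sub, mul_one, ← mul_assoc, ← _root_.map_mul, mul_inv_cancel₀ hc,
        _root_.map_one, one_mul]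
    rw [hfac]
    have hM : (a c⁻¹ * N) * (a c⁻¹ * N) = 0 := by
      rw [mul_assoc, ← mul_assoc N, ← Algebra.commutes c⁻¹ N, mul_assoc, ← mul_assoc,
        hN, mul_zero]
    exact ((isUnit_iff_ne_zero.mpr hc).map (algebraMap ℂ A)).mul
      (IsNilpotent.isUnit_one_sub ⟨2, by rw [sq, hM]⟩)
  · rintro rfl
    rw [sub_self, map_zero, zero_sub]
    intro h
    have : IsUnit ((-N) * (-N)) := h.mul h
    rw [neg_mul_neg, hN] at this
    exact not_isUnit_zero this

/-- For the generalized saddle-point matrix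
`𝒜 = [[Φ, Ψ₁],[Ψ₂, -Θ]]` with `Φ` invertible and invertible Schur complement
`S = Θ + Ψ₂ Φ⁻¹ Ψ₁`, and the block upper-triangular preconditioner
`P = [[Φ, Ψ₁],[0, -S]]`, the spectrum of `𝒜 P⁻¹` (as a complex matrix)
equals `{1}`. -/
theorem saddle_point_preconditioned_spectrum
    (n m : ℕ) (hn : 0 < n) (hm : 0 < m)
    (Φ : Matrix (Fin n) (Fin n) ℝ) (Ψ₁ : Matrix (Fin n) (Fin m) ℝ)
    (Ψ₂ : Matrix (Fin m) (Fin n) ℝ) (Θ : Matrix (Fin m) (Fin m) ℝ)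
    (hΦ : IsUnit Φ.det)
    (S : Matrix (Fin m) (Fin m) ℝ) (hS : S = Θ + Ψ₂ * Φ⁻¹ * Ψ₁)
    (hSinv : IsUnit S.det)
    (𝒜 : Matrix (Fin n ⊕ Fin m) (Fin n ⊕ Fin m) ℝ)
    (h𝒜 : 𝒜 = Matrix.fromBlocks Φ Ψ₁ Ψ₂ (-Θ))
    (P : Matrix (Fin n ⊕ Fin m) (Fin n ⊕ Fin m) ℝ)
    (hP : P = Matrix.fromBlocks Φ Ψ₁ 0 (-S)) :
    spectrum ℂ ((𝒜 * P⁻¹).map (Complex.ofReal)) = {1} := by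
  have hΦi : Φ * Φ⁻¹ = 1 := mul_nonsing_inv Φ hΦ
  have hSi : S * S⁻¹ = 1 := mul_nonsing_inv S hSinv
  set Q : Matrix (Fin n ⊕ Fin m) (Fin n ⊕ Fin m) ℝ :=
    fromBlocks Φ⁻¹ (Φ⁻¹ * Ψ₁ * S⁻¹) 0 (-S⁻¹) with hQ
  have h11 : Φ * Φ⁻¹ + Ψ₁ * (0 : Matrix (Fin m) (Fin n) ℝ) = 1 := by
    rw [hΦi, Matrix.mul_zero, add_zero]
  have h12 : Φ * (Φ⁻¹ * Ψ₁ * S⁻¹) + Ψ₁ * (-S⁻¹) = (0 : Matrix (Fin n) (Fin m) ℝ) := by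
    rw [← Matrix.mul_assoc, ← Matrix.mul_assoc, hΦi, Matrix.one_mul, Matrix.mul_neg,
      add_neg_cancel]
  have hPQ : P * Q = 1 := by
    rw [hP, hQ, fromBlocks_multiply, h11, h12, Matrix.zero_mul, Matrix.mul_zero,
      add_zero, Matrix.zero_mul, zero_add, Matrix.neg_mul, Matrix.mul_neg, neg_neg,
      hSi, fromBlocks_one]
  have hPinv : P⁻¹ = Q := inv_eq_right_inv hPQ
  have hAQ : 𝒜 * Q = 1 + fromBlocks 0 0 (Ψ₂ * Φ⁻¹) 0 := by
    have h21 : Ψ₂ * Φ⁻¹ + (-Θ) * (0 : Matrix (Fin m) (Fin n) ℝ) = Ψ₂ * Φ⁻¹ := by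
      rw [Matrix.mul_zero, add_zero]
    have h22 : Ψ₂ * (Φ⁻¹ * Ψ₁ * S⁻¹) + (-Θ) * (-S⁻¹) = (1 : Matrix (Fin m) (Fin m) ℝ) := by
      rw [Matrix.neg_mul, Matrix.mul_neg, neg_neg, ← Matrix.mul_assoc, ← Matrix.mul_assoc,
        ← Matrix.add_mul]
      have hsum : Ψ₂ * Φ⁻¹ * Ψ₁ + Θ = S := by rw [hS]; exact add_comm _ _
      rw [hsum, hSi]
    rw [h𝒜, hQ, fromBlocks_multiply, h11, h12, h21, h22, ← fromBlocks_one,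
      fromBlocks_add]
    simp
  rw [hPinv, hAQ]
  have hmap : ((1 : Matrix (Fin n ⊕ Fin m) (Fin n ⊕ Fin m) ℝ)
      + fromBlocks 0 0 (Ψ₂ * Φ⁻¹) 0).map Complex.ofReal
      = 1 + fromBlocks 0 0 ((Ψ₂ * Φ⁻¹).map Complex.ofReal) 0 := by
    rw [Matrix.map_add _ (fun a b => Complex.ofReal_add a b),
      Matrix.map_one _ Complex.ofReal_zero Complex.ofReal_one, fromBlocks_map]
    simp
  rw [hmap]
  haveI : Nonempty (Fin n ⊕ Fin m) := ⟨Sum.inl ⟨0, hn⟩⟩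
  apply spec_one_add_sq_zero
  rw [fromBlocks_multiply]
  simp
end

section
/- Let 𝒜 = [[Φ, Ψ₁],[Ψ₂, -Θ]] be a generalized saddle-point matrix with Φ invertible and Schur complement S := Θ + Ψ₂ Φ⁻¹ Ψ₁ invertible, and let P = [[Φ, Ψ₁],[0, -S]]. Then the minimal polynomial of the preconditioned matrix 𝒜 P⁻¹ over ℝ divides (X - 1)²; in particular, it has degree at most two. -/
open Matrix Polynomial

/-- For the generalized saddle-point matrix
`𝒜 = [[Φ, Ψ₁],[Ψ₂, -Θ]]` with `Φ` invertible and invertible Schur complement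
`S = Θ + Ψ₂ Φ⁻¹ Ψ₁`, and the block upper-triangular preconditioner
`P = [[Φ, Ψ₁],[0, -S]]`, the minimal polynomial of `𝒜 P⁻¹` over `ℝ`
divides `(X - 1)²`; in particular it has degree at most two. -/
theorem saddle_point_preconditioned_minpoly
    (n m : ℕ) (hn : 0 < n) (hm : 0 < m)
    (Φ : Matrix (Fin n) (Fin n) ℝ) (Ψ₁ : Matrix (Fin n) (Fin m) ℝ)
    (Ψ₂ : Matrix (Fin m) (Fin n) ℝ) (Θ : Matrix (Fin m) (Fin m) ℝ)
    (hΦ : IsUnit Φ.det)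
    (S : Matrix (Fin m) (Fin m) ℝ) (hS : S = Θ + Ψ₂ * Φ⁻¹ * Ψ₁)
    (hSinv : IsUnit S.det)
    (𝒜 : Matrix (Fin n ⊕ Fin m) (Fin n ⊕ Fin m) ℝ)
    (h𝒜 : 𝒜 = Matrix.fromBlocks Φ Ψ₁ Ψ₂ (-Θ))
    (P : Matrix (Fin n ⊕ Fin m) (Fin n ⊕ Fin m) ℝ)
    (hP : P = Matrix.fromBlocks Φ Ψ₁ 0 (-S)) :
    minpoly ℝ (𝒜 * P⁻¹) ∣ (X - C 1) ^ 2 ∧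
      (minpoly ℝ (𝒜 * P⁻¹)).natDegree ≤ 2 := by
  have hΦi : Φ * Φ⁻¹ = 1 := Matrix.mul_nonsing_inv _ hΦ
  have hSi : S * S⁻¹ = 1 := Matrix.mul_nonsing_inv _ hSinv
  set Q : Matrix (Fin n ⊕ Fin m) (Fin n ⊕ Fin m) ℝ :=
    Matrix.fromBlocks Φ⁻¹ (Φ⁻¹ * Ψ₁ * S⁻¹) 0 (-S⁻¹) with hQ
  have e2 : Φ * (Φ⁻¹ * Ψ₁ * S⁻¹) + Ψ₁ * -S⁻¹ = 0 := by
    rw [← Matrix.mul_assoc, ← Matrix.mul_assoc, hΦi, Matrix.one_mul, Matrix.mul_neg]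
    exact add_neg_cancel _
  have hPQ : P * Q = 1 := by
    rw [hP, hQ, Matrix.fromBlocks_multiply, ← Matrix.fromBlocks_one]
    rw [e2]
    simp [hΦi, Matrix.neg_mul, Matrix.mul_neg, hSi]
  have hPinv : P⁻¹ = Q := Matrix.inv_eq_right_inv hPQ
  have e4 : Ψ₂ * (Φ⁻¹ * Ψ₁ * S⁻¹) + -Θ * -S⁻¹ = 1 := by
    have : Ψ₂ * (Φ⁻¹ * Ψ₁ * S⁻¹) + -Θ * -S⁻¹ = (Ψ₂ * Φ⁻¹ * Ψ₁ + Θ) * S⁻¹ := by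
      rw [Matrix.add_mul, Matrix.neg_mul, Matrix.mul_neg, neg_neg, Matrix.mul_assoc,
        Matrix.mul_assoc]
      rw [Matrix.mul_assoc]
    rw [this, show Ψ₂ * Φ⁻¹ * Ψ₁ + Θ = S by rw [hS, add_comm], hSi]
  have hM : 𝒜 * P⁻¹ = Matrix.fromBlocks 1 0 (Ψ₂ * Φ⁻¹) 1 := by
    rw [hPinv, h𝒜, hQ, Matrix.fromBlocks_multiply, e2, e4]
    simp [hΦi]
  have hsq : (𝒜 * P⁻¹ - 1) ^ 2 = 0 := by
    rw [hM, ← Matrix.fromBlocks_one]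
    have h1 : (Matrix.fromBlocks 1 0 (Ψ₂ * Φ⁻¹) 1 -
        Matrix.fromBlocks (1 : Matrix (Fin n) (Fin n) ℝ) 0 0 (1 : Matrix (Fin m) (Fin m) ℝ))
        = Matrix.fromBlocks 0 0 (Ψ₂ * Φ⁻¹) 0 := by
      ext (i|i) (j|j) <;> simp [Matrix.fromBlocks, Matrix.sub_apply]
    rw [h1, sq, Matrix.fromBlocks_multiply]
    simp
  have haev : Polynomial.aeval (𝒜 * P⁻¹) ((X - C 1 : ℝ[X]) ^ 2) = 0 := by
    rw [map_pow, map_sub, aeval_X, aeval_C]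
    simpa using hsq
  have hdvd := minpoly.dvd ℝ (𝒜 * P⁻¹) haev
  refine ⟨hdvd, ?_⟩
  have hne : ((X - C 1 : ℝ[X]) ^ 2) ≠ 0 := pow_ne_zero _ (X_sub_C_ne_zero 1)
  have h2 := Polynomial.natDegree_le_of_dvd hdvd hne
  rwa [Polynomial.natDegree_pow, Polynomial.natDegree_X_sub_C] at h2
end

section
/- Let 𝒜 = [[Φ, Ψ₁],[Ψ₂, -Θ]] be a generalized saddle-point matrix with Φ invertible and Schur complement S := Θ + Ψ₂ Φ⁻¹ Ψ₁ invertible, and let P_L = [[Φ, 0],[Ψ₂, -S]] be the block lower-triangular preconditioner. Then (𝒜 P_L⁻¹ - I)² = 0, i.e., the right-preconditioned matrix with the block lower-triangular preconditioner also has minimal polynomial dividing (X-1)². -/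
open Matrix

/-- For the generalized saddle-point matrix
`𝒜 = [[Φ, Ψ₁],[Ψ₂, -Θ]]` with `Φ` invertible and invertible Schur complement
`S = Θ + Ψ₂ Φ⁻¹ Ψ₁`, and the block lower-triangular preconditioner
`P_L = [[Φ, 0],[Ψ₂, -S]]`, one has `(𝒜 P_L⁻¹ - I)² = 0`. -/
theorem saddle_point_lower_preconditioned_nilpotent
    (n m : ℕ) (hn : 0 < n) (hm : 0 < m)
    (Φ : Matrix (Fin n) (Fin n) ℝ) (Ψ₁ : Matrix (Fin n) (Fin m) ℝ)
    (Ψ₂ : Matrix (Fin m) (Fin n) ℝ) (Θ : Matrix (Fin m) (Fin m) ℝ)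
    (hΦ : IsUnit Φ.det)
    (S : Matrix (Fin m) (Fin m) ℝ) (hS : S = Θ + Ψ₂ * Φ⁻¹ * Ψ₁)
    (hSinv : IsUnit S.det)
    (𝒜 : Matrix (Fin n ⊕ Fin m) (Fin n ⊕ Fin m) ℝ)
    (h𝒜 : 𝒜 = Matrix.fromBlocks Φ Ψ₁ Ψ₂ (-Θ))
    (PL : Matrix (Fin n ⊕ Fin m) (Fin n ⊕ Fin m) ℝ)
    (hPL : PL = Matrix.fromBlocks Φ 0 Ψ₂ (-S)) :
    (𝒜 * PL⁻¹ - 1) ^ 2 = 0 := by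
  have hΦ1 : Φ * Φ⁻¹ = 1 := Matrix.mul_nonsing_inv _ hΦ
  have hS1 : S * S⁻¹ = 1 := Matrix.mul_nonsing_inv _ hSinv
  have hB : PL⁻¹ = Matrix.fromBlocks Φ⁻¹ 0 (S⁻¹ * Ψ₂ * Φ⁻¹) (-S⁻¹) := by
    apply Matrix.inv_eq_right_inv
    rw [hPL, Matrix.fromBlocks_multiply]
    have h21 : Ψ₂ * Φ⁻¹ + -S * (S⁻¹ * Ψ₂ * Φ⁻¹) = 0 := by
      simp only [Matrix.neg_mul, ← Matrix.mul_assoc, hS1, Matrix.one_mul]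
      abel
    rw [hΦ1, h21]
    simp [hS1, Matrix.fromBlocks_one]
  set T : Matrix (Fin m) (Fin n) ℝ := S⁻¹ * Ψ₂ * Φ⁻¹ with hT
  set K : Matrix (Fin m) (Fin m) ℝ := Ψ₂ * Φ⁻¹ * Ψ₁ with hK
  have hΘ : Θ = S - K := by rw [hS, hK]; abel
  have hST : S * T = Ψ₂ * Φ⁻¹ := by
    rw [hT]
    simp only [← Matrix.mul_assoc, hS1, Matrix.one_mul]
  have hN : 𝒜 * PL⁻¹ - 1 =
      Matrix.fromBlocks (Ψ₁ * T) (-(Ψ₁ * S⁻¹)) (K * T) (-(K * S⁻¹)) := by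
    rw [sub_eq_iff_eq_add, h𝒜, hB, Matrix.fromBlocks_multiply]
    have e11 : Φ * Φ⁻¹ + Ψ₁ * T = Ψ₁ * T + 1 := by rw [hΦ1]; abel
    have e12 : Φ * (0 : Matrix (Fin n) (Fin m) ℝ) + Ψ₁ * -S⁻¹
        = -(Ψ₁ * S⁻¹) + (0 : Matrix (Fin n) (Fin m) ℝ) := by
      simp [Matrix.mul_neg]
    have e21 : Ψ₂ * Φ⁻¹ + -Θ * T = K * T + (0 : Matrix (Fin m) (Fin n) ℝ) := by
      rw [hΘ]
      simp only [Matrix.neg_mul, Matrix.sub_mul, hST, neg_sub, add_zero]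
      rw [← add_sub_assoc, add_sub_cancel_left]
    have e22 : Ψ₂ * (0 : Matrix (Fin n) (Fin m) ℝ) + -Θ * -S⁻¹
        = -(K * S⁻¹) + 1 := by
      rw [hΘ]
      simp only [Matrix.mul_zero, Matrix.neg_mul, Matrix.mul_neg, neg_neg,
        zero_add]
      rw [Matrix.sub_mul, hS1, sub_eq_neg_add]
    rw [e11, e12, e21, e22, ← Matrix.fromBlocks_add, Matrix.fromBlocks_one]
  rw [hN, pow_two, Matrix.fromBlocks_multiply]
  have k1 : Ψ₁ * T * (Ψ₁ * T) + -(Ψ₁ * S⁻¹) * (K * T) = 0 := by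
    simp [hT, hK, Matrix.mul_assoc]
  have k2 : Ψ₁ * T * -(Ψ₁ * S⁻¹) + -(Ψ₁ * S⁻¹) * -(K * S⁻¹) = 0 := by
    simp [hT, hK, Matrix.mul_assoc]
  have k3 : K * T * (Ψ₁ * T) + -(K * S⁻¹) * (K * T) = 0 := by
    simp [hT, hK, Matrix.mul_assoc]
  have k4 : K * T * -(Ψ₁ * S⁻¹) + -(K * S⁻¹) * -(K * S⁻¹) = 0 := by
    simp [hT, hK, Matrix.mul_assoc]
  rw [k1, k2, k3, k4]
  simp [Matrix.fromBlocks_zero]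
end

section
/- Let Φ ∈ ℝ^{n×n} and W ∈ ℝ^{m×m} be invertible, let Ψ₁ ∈ ℝ^{n×m}, Ψ₂ ∈ ℝ^{m×n}, let γ > 0, set S := Ψ₂ Φ⁻¹ Ψ₁, and assume that S and γ⁻¹ W + S are invertible (so that Φ_γ := Φ + γ Ψ₁ W⁻¹ Ψ₂ is invertible). Then the augmented Schur complement S_γ := Ψ₂ Φ_γ⁻¹ Ψ₁ is invertible and its inverse satisfies the Sherman–Morrison–Woodbury identity S_γ⁻¹ = γ W⁻¹ + S⁻¹. -/
open Matrix

/-- With `Φ` and `W` invertible, `γ > 0`, `S = Ψ₂ Φ⁻¹ Ψ₁`,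
and both `S` and `γ⁻¹ W + S` invertible (so `Φ_γ = Φ + γ Ψ₁ W⁻¹ Ψ₂` is
invertible), the augmented Schur complement `S_γ = Ψ₂ Φ_γ⁻¹ Ψ₁` is invertible
and `S_γ⁻¹ = γ W⁻¹ + S⁻¹` (Sherman–Morrison–Woodbury). -/
theorem augmented_schur_complement_inverse
    (n m : ℕ) (hn : 0 < n) (hm : 0 < m)
    (Φ : Matrix (Fin n) (Fin n) ℝ) (Ψ₁ : Matrix (Fin n) (Fin m) ℝ)
    (Ψ₂ : Matrix (Fin m) (Fin n) ℝ) (W : Matrix (Fin m) (Fin m) ℝ)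
    (hΦ : IsUnit Φ.det) (hW : IsUnit W.det) (γ : ℝ) (hγ : 0 < γ)
    (S : Matrix (Fin m) (Fin m) ℝ) (hS : S = Ψ₂ * Φ⁻¹ * Ψ₁)
    (hSinv : IsUnit S.det) (hWS : IsUnit (γ⁻¹ • W + S).det)
    (Φγ : Matrix (Fin n) (Fin n) ℝ) (hΦγ : Φγ = Φ + γ • (Ψ₁ * W⁻¹ * Ψ₂))
    (Sγ : Matrix (Fin m) (Fin m) ℝ) (hSγ : Sγ = Ψ₂ * Φγ⁻¹ * Ψ₁) :
    IsUnit Sγ.det ∧ Sγ⁻¹ = γ • W⁻¹ + S⁻¹ := by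
  have hγ0 : γ ≠ 0 := ne_of_gt hγ
  haveI : Invertible γ := invertibleOfNonzero hγ0
  set T : Matrix (Fin m) (Fin m) ℝ := γ⁻¹ • W + S with hT
  -- inverse of the scaled middle matrix
  have hCinv : (γ • W⁻¹)⁻¹ = γ⁻¹ • W := by
    rw [Matrix.inv_smul (A := W⁻¹) γ (isUnit_nonsing_inv_det W hW), invOf_eq_inv γ,
      nonsing_inv_nonsing_inv W hW]
  have hCdet : IsUnit (γ • W⁻¹).det := by
    rw [det_smul]
    exact (IsUnit.pow _ hγ0.isUnit).mul (isUnit_nonsing_inv_det W hW)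
  -- rewrite Φγ in Woodbury form
  have hΦγ' : Φγ = Φ + Ψ₁ * (γ • W⁻¹) * Ψ₂ := by
    rw [hΦγ]
    congr 1
    rw [Matrix.mul_smul, Matrix.smul_mul]
  have hACdet : IsUnit ((γ • W⁻¹)⁻¹ + Ψ₂ * Φ⁻¹ * Ψ₁).det := by
    rw [hCinv, ← hS]
    exact hWS
  have hWood : Φγ⁻¹ = Φ⁻¹ - Φ⁻¹ * Ψ₁ * T⁻¹ * Ψ₂ * Φ⁻¹ := by
    rw [hΦγ', Matrix.add_mul_mul_inv_eq_sub _ _ _ _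
      ((Matrix.isUnit_iff_isUnit_det Φ).2 hΦ)
      ((Matrix.isUnit_iff_isUnit_det _).2 hCdet)
      ((Matrix.isUnit_iff_isUnit_det _).2 (by rwa [hCinv, ← hS])),
      hCinv, ← hS]
  have hTT : T⁻¹ * T = 1 := nonsing_inv_mul T hWS
  have hSS : S * S⁻¹ = 1 := mul_nonsing_inv S hSinv
  -- factor Sγ
  have hSγ' : Sγ = S * T⁻¹ * (γ⁻¹ • W) := by
    have : S * T⁻¹ * (γ⁻¹ • W) = S * T⁻¹ * T - S * T⁻¹ * S := by
      rw [← Matrix.mul_sub, hT]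
      congr 1
      abel
    rw [this, Matrix.mul_assoc S T⁻¹ T, hTT, Matrix.mul_one, hSγ, hWood, hS]
    simp only [Matrix.mul_sub, Matrix.sub_mul, Matrix.mul_assoc, hT]
  have hdet : IsUnit Sγ.det := by
    rw [hSγ', det_mul, det_mul, det_smul]
    exact (hSinv.mul ((isUnit_nonsing_inv_det T hWS))).mul
      ((IsUnit.pow _ (inv_ne_zero hγ0).isUnit).mul hW)
  refine ⟨hdet, Matrix.inv_eq_right_inv ?_⟩
  have key : (γ⁻¹ • W) * (γ • W⁻¹ + S⁻¹) = T * S⁻¹ := by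
    rw [Matrix.mul_add, hT, Matrix.add_mul, smul_mul_smul_comm, inv_mul_cancel₀ hγ0,
      one_smul, mul_nonsing_inv W hW, hSS, add_comm]
  rw [hSγ', Matrix.mul_assoc (S * T⁻¹), key, ← Matrix.mul_assoc,
    Matrix.mul_assoc S T⁻¹ T, hTT, Matrix.mul_one, hSS]
end

section
/- Let A ∈ ℝ^{s×s} be invertible, B ∈ ℝ^{n_p×n_u}, let Φ be an invertible real (s·n_u)×(s·n_u) matrix, and let Δt ≠ 0. Define Ψ₁ := Δt (A ⊗ Bᵀ), Ψ₂ := Δt (A ⊗ B), and S_int := (I_s ⊗ B) Φ⁻¹ (I_s ⊗ Bᵀ), and assume S_int is invertible. Then Ψ₂ Φ⁻¹ Ψ₁ is invertible and (Ψ₂ Φ⁻¹ Ψ₁)⁻¹ = Δt⁻² · (A⁻¹ ⊗ I_{n_p}) · S_int⁻¹ · (A⁻¹ ⊗ I_{n_p}). -/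
open Matrix Kronecker

/-- With `A` invertible, `Δt ≠ 0`, `Φ` invertible,
`Ψ₁ = Δt (A ⊗ Bᵀ)`, `Ψ₂ = Δt (A ⊗ B)` and
`S_int = (I ⊗ B) Φ⁻¹ (I ⊗ Bᵀ)` invertible, the matrix `Ψ₂ Φ⁻¹ Ψ₁` is
invertible and `(Ψ₂ Φ⁻¹ Ψ₁)⁻¹ = Δt⁻² (A⁻¹ ⊗ I) S_int⁻¹ (A⁻¹ ⊗ I)`. -/
theorem kronecker_schur_inverse
    (s nu np : ℕ) (hs : 0 < s) (hnu : 0 < nu) (hnp : 0 < np)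
    (A : Matrix (Fin s) (Fin s) ℝ) (hA : IsUnit A.det)
    (B : Matrix (Fin np) (Fin nu) ℝ)
    (Φ : Matrix (Fin s × Fin nu) (Fin s × Fin nu) ℝ) (hΦ : IsUnit Φ.det)
    (Δt : ℝ) (hΔt : Δt ≠ 0)
    (Ψ₁ : Matrix (Fin s × Fin nu) (Fin s × Fin np) ℝ)
    (hΨ₁ : Ψ₁ = Δt • (A ⊗ₖ Bᵀ))
    (Ψ₂ : Matrix (Fin s × Fin np) (Fin s × Fin nu) ℝ)
    (hΨ₂ : Ψ₂ = Δt • (A ⊗ₖ B))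
    (Sint : Matrix (Fin s × Fin np) (Fin s × Fin np) ℝ)
    (hSint : Sint = ((1 : Matrix (Fin s) (Fin s) ℝ) ⊗ₖ B) * Φ⁻¹ *
        ((1 : Matrix (Fin s) (Fin s) ℝ) ⊗ₖ Bᵀ))
    (hSintInv : IsUnit Sint.det) :
    IsUnit (Ψ₂ * Φ⁻¹ * Ψ₁).det ∧
      (Ψ₂ * Φ⁻¹ * Ψ₁)⁻¹ =
        (Δt ^ 2)⁻¹ •
          ((A⁻¹ ⊗ₖ (1 : Matrix (Fin np) (Fin np) ℝ)) * Sint⁻¹ *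
            (A⁻¹ ⊗ₖ (1 : Matrix (Fin np) (Fin np) ℝ))) := by
  set K : Matrix (Fin s × Fin np) (Fin s × Fin np) ℝ :=
    A ⊗ₖ (1 : Matrix (Fin np) (Fin np) ℝ) with hK
  have hKdet : IsUnit K.det := by
    rw [hK, Matrix.det_kronecker, Matrix.det_one, one_pow, mul_one]
    exact hA.pow _
  have hKinv : K⁻¹ = A⁻¹ ⊗ₖ (1 : Matrix (Fin np) (Fin np) ℝ) := by
    rw [hK, Matrix.inv_kronecker, inv_one]
  have hfact : A ⊗ₖ B = K * ((1 : Matrix (Fin s) (Fin s) ℝ) ⊗ₖ B) := by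
    rw [hK, ← Matrix.mul_kronecker_mul, Matrix.mul_one, Matrix.one_mul]
  have hfact' : A ⊗ₖ Bᵀ = ((1 : Matrix (Fin s) (Fin s) ℝ) ⊗ₖ Bᵀ) * K := by
    rw [hK, ← Matrix.mul_kronecker_mul, Matrix.mul_one, Matrix.one_mul]
  have hM : Ψ₂ * Φ⁻¹ * Ψ₁ = (Δt ^ 2) • (K * Sint * K) := by
    rw [hΨ₁, hΨ₂, hSint, hfact, hfact']
    rw [Matrix.smul_mul, Matrix.mul_smul, Matrix.smul_mul, smul_smul, ← sq]
    simp only [Matrix.mul_assoc]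
  have hdet : IsUnit (Ψ₂ * Φ⁻¹ * Ψ₁).det := by
    rw [hM, Matrix.det_smul, Matrix.det_mul, Matrix.det_mul]
    exact (IsUnit.pow _ (isUnit_iff_ne_zero.mpr (pow_ne_zero 2 hΔt))).mul
      ((hKdet.mul hSintInv).mul hKdet)
  refine ⟨hdet, ?_⟩
  have h2 : (Δt ^ 2 : ℝ) ≠ 0 := pow_ne_zero 2 hΔt
  apply Matrix.inv_eq_right_inv
  rw [hM, hKinv.symm]
  rw [Matrix.smul_mul, Matrix.mul_smul, smul_smul, mul_inv_cancel₀ h2, one_smul]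
  calc K * Sint * K * (K⁻¹ * Sint⁻¹ * K⁻¹)
      = K * (Sint * ((K * K⁻¹) * (Sint⁻¹ * K⁻¹))) := by
        simp only [Matrix.mul_assoc]
    _ = 1 := by
        rw [Matrix.mul_nonsing_inv _ hKdet, Matrix.one_mul,
          ← Matrix.mul_assoc Sint, Matrix.mul_nonsing_inv _ hSintInv,
          Matrix.one_mul, Matrix.mul_nonsing_inv _ hKdet]
end

section
/- Let A_RK ∈ ℝ^{s×s} be invertible with last row equal to the weight vector b ∈ ℝ^s (i.e., a_{s,j} = b_j for all j). Then the stability function R(z) = 1 + z · bᵀ (I - z A_RK)⁻¹ 𝟙 tends to 0 as z → +∞. -/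
open Matrix Filter

/-- For an invertible Butcher matrix `A_RK` whose last row
equals the weight vector `b` (stiff accuracy), the stability function
`R(z) = 1 + z bᵀ (I - z A_RK)⁻¹ 𝟙` tends to `0` as `z → +∞`. -/
theorem stiffly_accurate_L_stable_limit
    (s : ℕ) (hs : 0 < s)
    (A : Matrix (Fin s) (Fin s) ℝ) (hA : IsUnit A.det)
    (b : Fin s → ℝ)
    (hlast : ∀ j, A ⟨s - 1, by omega⟩ j = b j) :
    Tendsto
        (fun z : ℝ =>
          1 + z * dotProduct b
            (((1 : Matrix (Fin s) (Fin s) ℝ) - z • A)⁻¹ *ᵥ fun _ => (1 : ℝ)))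
        atTop (nhds 0) := by
  have hslt : s - 1 < s := by omega
  set lst : Fin s := ⟨s - 1, hslt⟩ with hlst
  -- Step 1: algebraic identity for invertible 1 - z•A
  have key : ∀ z : ℝ, IsUnit ((1 - z • A : Matrix (Fin s) (Fin s) ℝ)).det →
      1 + z * dotProduct b
          (((1 : Matrix (Fin s) (Fin s) ℝ) - z • A)⁻¹ *ᵥ fun _ => (1 : ℝ))
        = ((((1 : Matrix (Fin s) (Fin s) ℝ) - z • A)⁻¹ *ᵥ fun _ => (1 : ℝ)) lst) := by
    intro z hz
    set M : Matrix (Fin s) (Fin s) ℝ := 1 - z • A with hM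
    set v : Fin s → ℝ := M⁻¹ *ᵥ (fun _ => (1 : ℝ)) with hv
    have hMv : M *ᵥ v = fun _ => (1 : ℝ) := by
      rw [hv, Matrix.mulVec_mulVec, Matrix.mul_nonsing_inv _ hz, Matrix.one_mulVec]
    have h1 : (M *ᵥ v) lst = 1 := by rw [hMv]
    have h2 : (M *ᵥ v) lst = v lst - z * dotProduct b v := by
      simp only [Matrix.mulVec, dotProduct, hM, Matrix.sub_apply,
        Matrix.smul_apply, Matrix.one_apply, sub_mul, Finset.sum_sub_distrib,
        smul_eq_mul]
      congr 1
      · simp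
      · rw [Finset.mul_sum]
        refine Finset.sum_congr rfl fun j _ => ?_
        rw [← hlast j]
        ring
    rw [h2] at h1
    linarith
  -- Step 2: eventual invertibility and formula
  have hdetA : ((-A : Matrix (Fin s) (Fin s) ℝ)).det ≠ 0 := by
    rw [Matrix.det_neg]
    exact mul_ne_zero (pow_ne_zero _ (by norm_num)) (hA.ne_zero)
  have hcontN : ContinuousAt (fun t : ℝ => (t • (1 : Matrix (Fin s) (Fin s) ℝ) - A)) 0 := by
    fun_prop
  have hN0 : (fun t : ℝ => (t • (1 : Matrix (Fin s) (Fin s) ℝ) - A)) 0 = -A := by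
    simp
  have hcontInv : ContinuousAt Inv.inv (-A : Matrix (Fin s) (Fin s) ℝ) := by
    apply continuousAt_matrix_inv
    rw [Ring.inverse_eq_inv']
    exact continuousAt_inv₀ hdetA
  have hcont : ContinuousAt
      (fun t : ℝ => (((t • (1 : Matrix (Fin s) (Fin s) ℝ) - A)⁻¹ *ᵥ fun _ => (1:ℝ)) lst)) 0 := by
    have h1 : ContinuousAt (fun t : ℝ => (t • (1 : Matrix (Fin s) (Fin s) ℝ) - A)⁻¹) 0 := by
      refine ContinuousAt.comp ?_ hcontN
      simpa using hcontInv
    exact (continuous_apply lst).continuousAt.comp ((Continuous.matrix_mulVec continuous_id continuous_const).continuousAt.comp h1)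
  have hinvz : Tendsto (fun z : ℝ => z⁻¹) atTop (nhds 0) := tendsto_inv_atTop_zero
  have hmain : Tendsto
      (fun z : ℝ => z⁻¹ * (((z⁻¹ • (1 : Matrix (Fin s) (Fin s) ℝ) - A)⁻¹ *ᵥ fun _ => (1:ℝ)) lst))
      atTop (nhds 0) := by
    have := hinvz.mul ((hcont.tendsto.comp hinvz))
    simpa using this
  refine hmain.congr' ?_
  -- eventual equality
  have hdet : Tendsto (fun z : ℝ => (z⁻¹ • (1 : Matrix (Fin s) (Fin s) ℝ) - A).det) atTop
      (nhds ((-A : Matrix (Fin s) (Fin s) ℝ)).det) := by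
    have hc : ContinuousAt (fun t : ℝ => (t • (1 : Matrix (Fin s) (Fin s) ℝ) - A).det) 0 :=
      (Continuous.matrix_det (by fun_prop)).continuousAt
    have := hc.tendsto.comp hinvz
    simpa [Function.comp_def] using this
  have hev1 : ∀ᶠ z : ℝ in atTop, (z⁻¹ • (1 : Matrix (Fin s) (Fin s) ℝ) - A).det ≠ 0 :=
    hdet.eventually_ne hdetA
  filter_upwards [hev1, eventually_gt_atTop (0:ℝ)] with z hNdet hz0
  have hz : z ≠ 0 := ne_of_gt hz0
  set N : Matrix (Fin s) (Fin s) ℝ := z⁻¹ • 1 - A with hNdef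
  have hMN : (1 : Matrix (Fin s) (Fin s) ℝ) - z • A = z • N := by
    rw [hNdef, smul_sub, smul_smul, mul_inv_cancel₀ hz, one_smul]
  have hNunit : IsUnit N.det := isUnit_iff_ne_zero.mpr hNdet
  have hMdet : IsUnit ((1 - z • A : Matrix (Fin s) (Fin s) ℝ)).det := by
    rw [hMN, Matrix.det_smul]
    exact isUnit_iff_ne_zero.mpr (mul_ne_zero (pow_ne_zero _ hz) hNdet)
  have hMinv : ((1 : Matrix (Fin s) (Fin s) ℝ) - z • A)⁻¹ = z⁻¹ • N⁻¹ := by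
    apply Matrix.inv_eq_right_inv
    rw [hMN, Matrix.smul_mul, Matrix.mul_smul, smul_smul, mul_inv_cancel₀ hz,
      one_smul, Matrix.mul_nonsing_inv _ hNunit]
  rw [key z hMdet, hMinv]
  simp [Matrix.smul_mulVec]
end
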